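/- (Global Markov property for Bayesian uncertainty networks.) Assume the setting of a local constraint family C over a parent assignment pa on V = Fin n with joint uncertainty set U = ⋂ i, C i, and suppose every C i is always definite. Let A, B, S be pairwise disjoint subsets of V (not necessarily spanning V). If S d-separates A and B, then A and B are conditionally independent given S with respect to U. -/

import Mathlib

/-- `k` is a descendant of `i`: `k` is reachable from `i` by the transitive
closure of the child relation (`i` is a child of `j` iff `j ∈ pa i`). -/
def Desc {n : ℕ} (pa : Fin n → Finset (Fin n)) (i k : Fin n) : Prop :=
  Relation.TransGen (fun a b => a ∈ pa b) i k

/-- `v 0, v 1, …, v m` is a trail: `m ≥ 1`, the vertices `v 0, …, v m` are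
pairwise distinct, and consecutive vertices are joined by an edge in one
direction or the other. -/
def IsTrail {n : ℕ} (pa : Fin n → Finset (Fin n)) (m : ℕ) (v : ℕ → Fin n) : Prop :=
  1 ≤ m ∧ (∀ k l, k ≤ m → l ≤ m → v k = v l → k = l) ∧
    ∀ k < m, v k ∈ pa (v (k + 1)) ∨ v (k + 1) ∈ pa (v k)

/-- The interior vertex at position `k` is a collider on the trail `v`. -/
def IsCollider {n : ℕ} (pa : Fin n → Finset (Fin n)) (v : ℕ → Fin n) (k : ℕ) : Prop :=
  v (k - 1) ∈ pa (v k) ∧ v (k + 1) ∈ pa (v k)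

/-- The trail `v 0, …, v m` is blocked by `S`: it has an interior non-collider
vertex in `S`, or an interior collider vertex such that neither it nor any of
its descendants lies in `S`. -/
def Blocked {n : ℕ} (pa : Fin n → Finset (Fin n)) (S : Set (Fin n)) (m : ℕ)
    (v : ℕ → Fin n) : Prop :=
  ∃ k, 0 < k ∧ k < m ∧
    ((¬ IsCollider pa v k ∧ v k ∈ S) ∨
      (IsCollider pa v k ∧ v k ∉ S ∧ ∀ d, Desc pa (v k) d → d ∉ S))

/-- `S` d-separates `A` and `B`: every trail from a vertex of `A` to a vertex
of `B` is blocked by `S`. -/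
def DSep {n : ℕ} (pa : Fin n → Finset (Fin n)) (A B S : Set (Fin n)) : Prop :=
  ∀ m (v : ℕ → Fin n), IsTrail pa m v → v 0 ∈ A → v m ∈ B → Blocked pa S m v

/-- `A` and `B` are conditionally independent given `S` with respect to `U`. -/
def CondIndep {n : ℕ} {D : Fin n → Type*} (U : Set (∀ j, D j))
    (A B S : Set (Fin n)) : Prop :=
  ∀ u ∈ U, ∀ w ∈ U, (∀ k ∈ S, u k = w k) →
    ∃ z ∈ U, (∀ k ∈ A ∪ S, z k = u k) ∧ ∀ k ∈ B, z k = w k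

section GM

variable {n : ℕ}

lemma pa_antisymm (pa : Fin n → Finset (Fin n)) (hpa : ∀ i j, j ∈ pa i → j < i)
    {a b : Fin n} (h1 : a ∈ pa b) (h2 : b ∈ pa a) : False :=
  absurd (hpa b a h1) (not_lt.2 (le_of_lt (hpa a b h2)))

/-- undirected adjacency -/
def AdjGM (pa : Fin n → Finset (Fin n)) (a b : Fin n) : Prop := a ∈ pa b ∨ b ∈ pa a

/-- `x` is in `S` or has a descendant in `S` -/
def DescS (pa : Fin n → Finset (Fin n)) (S : Set (Fin n)) (x : Fin n) : Prop :=
  x ∈ S ∨ ∃ d, Desc pa x d ∧ d ∈ S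

/-- active walk (repetitions allowed) -/
def ActiveW (pa : Fin n → Finset (Fin n)) (S : Set (Fin n)) (m : ℕ) (v : ℕ → Fin n) : Prop :=
  (∀ k < m, AdjGM pa (v k) (v (k + 1))) ∧
  ∀ k, 0 < k → k < m →
    (IsCollider pa v k → DescS pa S (v k)) ∧ (¬ IsCollider pa v k → v k ∉ S)

lemma isCollider_congr (pa : Fin n → Finset (Fin n)) {v v' : ℕ → Fin n} {k k' : ℕ}
    (h1 : v (k - 1) = v' (k' - 1)) (h2 : v k = v' k') (h3 : v (k + 1) = v' (k' + 1)) :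
    IsCollider pa v k ↔ IsCollider pa v' k' := by
  simp [IsCollider, h1, h2, h3]

lemma activeW_nil (pa : Fin n → Finset (Fin n)) (S : Set (Fin n)) (x : Fin n) :
    ActiveW pa S 0 (fun _ => x) := by
  constructor
  · intro k hk; omega
  · intro k hk1 hk2; omega

lemma activeW_single (pa : Fin n → Finset (Fin n)) (S : Set (Fin n)) {a b : Fin n}
    (h : AdjGM pa a b) : ActiveW pa S 1 (fun k => if k = 0 then a else b) := by
  constructor
  · intro k hk
    have : k = 0 := by omega
    subst this; simpa using h
  · intro k hk1 hk2; omega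

lemma activeW_dir (pa : Fin n → Finset (Fin n)) (hpa : ∀ i j, j ∈ pa i → j < i)
    (S : Set (Fin n)) {r : ℕ} {u : ℕ → Fin n}
    (hdir : ∀ s < r, u s ∈ pa (u (s + 1))) (hS : ∀ s, 0 < s → s < r → u s ∉ S) :
    ActiveW pa S r u := by
  constructor
  · intro k hk; exact Or.inl (hdir k hk)
  · intro k hk1 hk2
    have hnc : ¬ IsCollider pa u k := by
      rintro ⟨-, h2⟩
      exact pa_antisymm pa hpa (hdir k hk2) h2
    exact ⟨fun hc => absurd hc hnc, fun _ => hS k hk1 hk2⟩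

lemma activeW_rev (pa : Fin n → Finset (Fin n)) (hpa : ∀ i j, j ∈ pa i → j < i)
    (S : Set (Fin n)) {r : ℕ} {u : ℕ → Fin n}
    (hdir : ∀ s < r, u s ∈ pa (u (s + 1))) (hS : ∀ s, 0 < s → s < r → u s ∉ S) :
    ActiveW pa S r (fun k => u (r - k)) := by
  constructor
  · intro k hk
    right
    have h : r - (k + 1) < r := by omega
    have := hdir (r - (k + 1)) h
    have e : r - (k + 1) + 1 = r - k := by omega
    rw [e] at this; exact this
  · intro k hk1 hk2
    have hnc : ¬ IsCollider pa (fun k => u (r - k)) k := by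
      rintro ⟨h1, -⟩
      simp only at h1
      have h : r - k < r := by omega
      have := hdir (r - k) h
      have e : r - k + 1 = r - (k - 1) := by omega
      rw [e] at this
      exact pa_antisymm pa hpa this h1
    refine ⟨fun hc => absurd hc hnc, fun _ => hS (r - k) (by omega) (by omega)⟩

lemma activeW_concat (pa : Fin n → Finset (Fin n)) (S : Set (Fin n)) {m r : ℕ}
    {v u : ℕ → Fin n}
    (hv : ActiveW pa S m v) (hu : ActiveW pa S r u) (hvu : v m = u 0)
    (hj : 0 < m → 0 < r →
      (v (m - 1) ∈ pa (v m) → u 1 ∈ pa (u 0) → DescS pa S (v m)) ∧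
      (¬ (v (m - 1) ∈ pa (v m) ∧ u 1 ∈ pa (u 0)) → v m ∉ S)) :
    ActiveW pa S (m + r) (fun k => if k ≤ m then v k else u (k - m)) := by
  set W : ℕ → Fin n := fun k => if k ≤ m then v k else u (k - m) with hW
  have hWle : ∀ k, k ≤ m → W k = v k := fun k hk => if_pos hk
  have hWge : ∀ k, m ≤ k → W k = u (k - m) := by
    intro k hk
    rcases eq_or_lt_of_le hk with h | h
    · subst h; simp [hW, hvu]
    · simp [hW, Nat.not_le.2 h]
  constructor
  · intro k hk
    rcases lt_or_ge k m with h | h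
    · rw [hWle k (by omega), hWle (k + 1) (by omega)]
      exact hv.1 k h
    · rw [hWge k h, hWge (k + 1) (by omega)]
      have e : k - m + 1 = k + 1 - m := by omega
      rw [← e]
      exact hu.1 (k - m) (by omega)
  · intro k hk1 hk2
    rcases lt_trichotomy k m with h | h | h
    · have e1 : W (k - 1) = v (k - 1) := hWle _ (by omega)
      have e2 : W k = v k := hWle _ (by omega)
      have e3 : W (k + 1) = v (k + 1) := hWle _ (by omega)
      have hc := isCollider_congr pa e1.symm e2.symm e3.symm
      rw [← hc, e2]
      exact hv.2 k hk1 h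
    · subst h
      have hr : 0 < r := by omega
      have e1 : W (k - 1) = v (k - 1) := hWle _ (by omega)
      have e2 : W k = v k := hWle _ le_rfl
      have e3 : W (k + 1) = u 1 := by rw [hWge _ (by omega)]; congr 1; omega
      have hcoll : IsCollider pa W k ↔ (v (k - 1) ∈ pa (v k) ∧ u 1 ∈ pa (u 0)) := by
        rw [IsCollider, e1, e2, e3, hvu]
      constructor
      · intro hc
        rw [hcoll] at hc
        rw [e2]
        exact (hj hk1 hr).1 hc.1 hc.2
      · intro hc
        rw [hcoll, not_and_or] at hc
        rw [e2]
        exact (hj hk1 hr).2 (by tauto)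
    · have e1 : W (k - 1) = u (k - 1 - m) := hWge _ (by omega)
      have e2 : W k = u (k - m) := hWge _ (by omega)
      have e3 : W (k + 1) = u (k + 1 - m) := hWge _ (by omega)
      have f1 : k - 1 - m = k - m - 1 := by omega
      have f3 : k + 1 - m = k - m + 1 := by omega
      rw [f1] at e1; rw [f3] at e3
      have hc := isCollider_congr pa e1.symm e2.symm e3.symm
      rw [← hc, e2]
      exact hu.2 (k - m) (by omega) (by omega)

end GM

section GM2
variable {n : ℕ}

lemma activeW_splice (pa : Fin n → Finset (Fin n)) (hpa : ∀ i j, j ∈ pa i → j < i)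
    (S : Set (Fin n)) {m : ℕ} {v : ℕ → Fin n} (hv : ActiveW pa S m v)
    {i j : ℕ} (hij : i < j) (hjm : j ≤ m) (heq : v i = v j) :
    ∃ (m' : ℕ) (v' : ℕ → Fin n), m' < m ∧ ActiveW pa S m' v' ∧ v' 0 = v 0 ∧ v' m' = v m := by
  classical
  set d := j - i with hd
  set m' := m - d with hm'
  set v' : ℕ → Fin n := fun k => if k < i then v k else v (k + d) with hv'
  have hvi : ∀ k ≤ i, v' k = v k := by
    intro k hk
    rcases lt_or_eq_of_le hk with h | h
    · exact if_pos h
    · subst h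
      simp only [hv', if_neg (lt_irrefl k)]
      have : k + d = j := by omega
      rw [this, ← heq]
  have hvk : ∀ k, i ≤ k → v' k = v (k + d) := by
    intro k hk
    rcases lt_or_eq_of_le hk with h | h
    · exact if_neg (by omega)
    · subst h; simp only [hv', if_neg (lt_irrefl i)]
  refine ⟨m', v', by omega, ⟨?_, ?_⟩, ?_, ?_⟩
  · -- edges
    intro k hk
    rcases lt_or_ge k i with h | h
    · rw [hvi k (by omega), hvi (k + 1) (by omega)]
      exact hv.1 k (by omega)
    · rw [hvk k h, hvk (k + 1) (by omega)]
      have e : k + 1 + d = k + d + 1 := by omega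
      rw [e]
      exact hv.1 (k + d) (by omega)
  · -- interior
    intro k hk1 hk2
    rcases lt_trichotomy k i with h | h | h
    · have e1 : v' (k - 1) = v (k - 1) := hvi _ (by omega)
      have e2 : v' k = v k := hvi _ (by omega)
      have e3 : v' (k + 1) = v (k + 1) := hvi _ (by omega)
      have hc := isCollider_congr pa e1 e2 e3
      rw [hc, e2]
      exact hv.2 k hk1 (by omega)
    · subst h
      have him : 0 < k := hk1
      have hjm' : j < m := by omega
      have e1 : v' (k - 1) = v (k - 1) := hvi _ (by omega)
      have e2 : v' k = v k := hvi _ le_rfl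
      have e3 : v' (k + 1) = v (j + 1) := by
        rw [hvk _ (by omega)]; congr 1; omega
      have hcoll : IsCollider pa v' k ↔ (v (k - 1) ∈ pa (v k) ∧ v (j + 1) ∈ pa (v k)) := by
        rw [IsCollider, e1, e2, e3]
      constructor
      · -- junction collider
        intro hc
        rw [hcoll] at hc
        rw [e2]
        obtain ⟨h1, h2⟩ := hc
        by_cases hc1 : v (k + 1) ∈ pa (v k)
        · exact (hv.2 k hk1 (by omega)).1 ⟨h1, hc1⟩
        by_cases hc2 : v (j - 1) ∈ pa (v j)
        · have := (hv.2 j (by omega) hjm').1 ⟨hc2, by rw [← heq]; exact h2⟩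
          rw [← heq] at this
          exact this
        -- both edges out of v k = v j
        · have hRi : v k ∈ pa (v (k + 1)) := by
            rcases hv.1 k (by omega) with h | h
            · exact h
            · exact absurd h hc1
          have hLj : v j ∈ pa (v (j - 1)) := by
            have hadj := hv.1 (j - 1) (by omega)
            have e : j - 1 + 1 = j := by omega
            rw [e] at hadj
            rcases hadj with h | h
            · exact absurd h hc2
            · exact h
          have hkj1 : k < j - 1 := by
            rcases Nat.lt_or_ge k (j - 1) with h | h
            · exact h
            · exfalso
              have : j - 1 = k := by omega
              rw [this] at hLj
              have : j = k + 1 := by omega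
              rw [this] at hLj
              exact hc1 hLj
          set Q : ℕ → Prop := fun l => k < l ∧ ¬ (v l ∈ pa (v (l + 1))) with hQ
          have hex : ∃ l, Q l := by
            refine ⟨j - 1, hkj1, ?_⟩
            intro h
            exact pa_antisymm pa hpa h (by
              have e : j - 1 + 1 = j := by omega
              rw [← e] at hLj
              exact hLj)
          have hQd : DecidablePred Q := Classical.decPred Q
          set p := @Nat.find Q hQd hex with hp
          have hpQ : Q p := @Nat.find_spec Q hQd hex
          have hple : p ≤ j - 1 := @Nat.find_min' Q hQd hex _ (by
            refine ⟨hkj1, ?_⟩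
            intro h
            exact pa_antisymm pa hpa h (by
              have e : j - 1 + 1 = j := by omega
              rw [← e] at hLj
              exact hLj))
          have hmin : ∀ l, k < l → l < p → v l ∈ pa (v (l + 1)) := by
            intro l hl1 hl2
            by_contra hcon
            exact (@Nat.find_min Q hQd hex l hl2) ⟨hl1, hcon⟩
          have hpm : p < m := by omega
          -- directed chain v k -> v p
          have hchain : ∀ l, k < l → l ≤ p → Desc pa (v k) (v l) := by
            intro l hl1 hl2
            induction l with
            | zero => omega
            | succ l ih =>
              rcases Nat.lt_or_ge k l with h | h
              · exact Relation.TransGen.tail (ih h (by omega)) (hmin l h (by omega))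
              · have : l = k := by omega
                subst this
                exact Relation.TransGen.single hRi
          have hdesc : Desc pa (v k) (v p) := hchain p (by omega) le_rfl
          -- collider at p
          have hcp : IsCollider pa v p := by
            constructor
            · rcases Nat.lt_or_ge k (p - 1) with h | h
              · have := hmin (p - 1) h (by omega)
                have e : p - 1 + 1 = p := by omega
                rw [e] at this
                exact this
              · have : p - 1 = k := by omega
                rw [this]
                have e : k + 1 = p := by omega
                rw [e] at hRi
                exact hRi
            · rcases hv.1 p hpm with h | h
              · exact absurd h hpQ.2
              · exact h
          rcases (hv.2 p (by omega) hpm).1 hcp with h | ⟨e, he1, he2⟩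
          · exact Or.inr ⟨v p, hdesc, h⟩
          · exact Or.inr ⟨e, Relation.TransGen.trans hdesc he1, he2⟩
      · -- junction non-collider
        intro hnc
        rw [e2]
        intro hS
        have hci : IsCollider pa v k := by
          by_contra hc
          exact (hv.2 k hk1 (by omega)).2 hc hS
        have hcj : IsCollider pa v j := by
          by_contra hc
          exact (hv.2 j (by omega) hjm').2 hc (by rw [← heq]; exact hS)
        apply hnc
        rw [hcoll]
        exact ⟨hci.1, by rw [heq]; exact hcj.2⟩
    · have e1 : v' (k - 1) = v (k - 1 + d) := hvk _ (by omega)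
      have e2 : v' k = v (k + d) := hvk _ (by omega)
      have e3 : v' (k + 1) = v (k + 1 + d) := hvk _ (by omega)
      have f1 : k - 1 + d = k + d - 1 := by omega
      have f3 : k + 1 + d = k + d + 1 := by omega
      rw [f1] at e1; rw [f3] at e3
      have hc := isCollider_congr pa e1 e2 e3
      rw [hc, e2]
      exact hv.2 (k + d) (by omega) (by omega)
  · rcases Nat.eq_zero_or_pos i with h | h
    · subst h
      rw [hvk 0 le_rfl]
      have e : 0 + d = j := by omega
      rw [e, ← heq]
    · exact hvi 0 (by omega)
  · rw [hvk m' (by omega)]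
    congr 1
    omega

lemma activeW_to_trail (pa : Fin n → Finset (Fin n)) (hpa : ∀ i j, j ∈ pa i → j < i)
    {A B S : Set (Fin n)} (hAB : Disjoint A B) :
    ∀ m (v : ℕ → Fin n), 1 ≤ m → ActiveW pa S m v → v 0 ∈ A → v m ∈ B →
    ∃ m' v', IsTrail pa m' v' ∧ ¬ Blocked pa S m' v' ∧ v' 0 ∈ A ∧ v' m' ∈ B := by
  intro m
  induction m using Nat.strong_induction_on with
  | _ m ih =>
    intro v hm hv hv0 hvm
    by_cases hinj : ∀ k l, k ≤ m → l ≤ m → v k = v l → k = l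
    · refine ⟨m, v, ⟨hm, hinj, fun k hk => hv.1 k hk⟩, ?_, hv0, hvm⟩
      rintro ⟨k, hk1, hk2, hcs⟩
      rcases hcs with ⟨hnc, hkS⟩ | ⟨hc, hkS, hnod⟩
      · exact (hv.2 k hk1 hk2).2 hnc hkS
      · rcases (hv.2 k hk1 hk2).1 hc with h | ⟨e, he1, he2⟩
        · exact hkS h
        · exact hnod e he1 he2
    · push_neg at hinj
      obtain ⟨k, l, hk, hl, heq, hne⟩ := hinj
      have hkey : ∃ i j, i < j ∧ j ≤ m ∧ v i = v j := by
        rcases Nat.lt_or_ge k l with h | h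
        · exact ⟨k, l, h, hl, heq⟩
        · exact ⟨l, k, by omega, hk, heq.symm⟩
      obtain ⟨i, j, hij, hjm, hveq⟩ := hkey
      obtain ⟨m', v', hlt, hv', h0', hm'⟩ := activeW_splice pa hpa S hv hij hjm hveq
      have hm1 : 1 ≤ m' := by
        rcases Nat.eq_zero_or_pos m' with h | h
        · exfalso
          rw [h] at hm'
          rw [h0'] at hm'
          exact Set.disjoint_left.1 hAB (hm' ▸ hv0) hvm
        · exact h
      exact ih m' hlt v' hm1 hv' (h0' ▸ hv0) (hm' ▸ hvm)

end GM2

section GM3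
variable {n : ℕ}

/-- ancestral closure -/
def Anc (pa : Fin n → Finset (Fin n)) (W : Set (Fin n)) : Set (Fin n) :=
  {k | ∃ t ∈ W, k = t ∨ Desc pa k t}

lemma subset_anc (pa : Fin n → Finset (Fin n)) (W : Set (Fin n)) : W ⊆ Anc pa W :=
  fun k hk => ⟨k, hk, Or.inl rfl⟩

lemma anc_parent (pa : Fin n → Finset (Fin n)) {W : Set (Fin n)} {k j : Fin n}
    (hk : k ∈ Anc pa W) (hj : j ∈ pa k) : j ∈ Anc pa W := by
  obtain ⟨t, ht, h | h⟩ := hk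
  · exact ⟨t, ht, Or.inr (h ▸ Relation.TransGen.single hj)⟩
  · exact ⟨t, ht, Or.inr (Relation.TransGen.head hj h)⟩

/-- moral edge in the ancestral set -/
def MEdge (pa : Fin n → Finset (Fin n)) (T : Set (Fin n)) (x y : Fin n) : Prop :=
  x ∈ T ∧ y ∈ T ∧ (x ∈ pa y ∨ y ∈ pa x ∨ ∃ c, c ∈ T ∧ x ∈ pa c ∧ y ∈ pa c)

/-- moral reachability from `A` avoiding `S` -/
def Atil (pa : Fin n → Finset (Fin n)) (A B S : Set (Fin n)) : Set (Fin n) :=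
  {y | ∃ a ∈ A, Relation.ReflTransGen
      (fun p q => MEdge pa (Anc pa (A ∪ B ∪ S)) p q ∧ q ∉ S) a y}

lemma subset_atil (pa : Fin n → Finset (Fin n)) (A B S : Set (Fin n)) :
    A ⊆ Atil pa A B S := fun a ha => ⟨a, ha, Relation.ReflTransGen.refl⟩

lemma atil_mem (pa : Fin n → Finset (Fin n)) {A B S : Set (Fin n)} (hAS : Disjoint A S)
    {y : Fin n} (hy : y ∈ Atil pa A B S) : y ∈ Anc pa (A ∪ B ∪ S) ∧ y ∉ S := by
  obtain ⟨a, ha, hrt⟩ := hy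
  induction hrt with
  | refl => exact ⟨subset_anc _ _ (Or.inl (Or.inl ha)), Set.disjoint_left.1 hAS ha⟩
  | tail _ hstep _ => exact ⟨hstep.1.2.1, hstep.2⟩

lemma atil_step (pa : Fin n → Finset (Fin n)) {A B S : Set (Fin n)} {x y : Fin n}
    (hx : x ∈ Atil pa A B S) (hxy : MEdge pa (Anc pa (A ∪ B ∪ S)) x y) (hy : y ∉ S) :
    y ∈ Atil pa A B S := by
  obtain ⟨a, ha, hrt⟩ := hx
  exact ⟨a, ha, Relation.ReflTransGen.tail hrt ⟨hxy, hy⟩⟩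

/-- from a vertex of the ancestral set, either it reaches `S` or it has a
directed path to `A ∪ B` avoiding `S` in its interior. -/
lemma reach_split (pa : Fin n → Finset (Fin n)) (A B S : Set (Fin n)) :
    ∀ y : Fin n, y ∈ Anc pa (A ∪ B ∪ S) →
    DescS pa S y ∨ y ∈ A ∪ B ∨
    ∃ (r : ℕ) (u : ℕ → Fin n), 1 ≤ r ∧ u 0 = y ∧ u r ∈ A ∪ B ∧
      (∀ s < r, u s ∈ pa (u (s + 1))) ∧ (∀ s, 0 < s → s < r → u s ∉ S) := by
  classical
  have H : ∀ t : Fin n, t ∈ A ∪ B ∪ S → ∀ y : Fin n, Desc pa y t →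
      DescS pa S y ∨ y ∈ A ∪ B ∨
      ∃ (r : ℕ) (u : ℕ → Fin n), 1 ≤ r ∧ u 0 = y ∧ u r ∈ A ∪ B ∧
        (∀ s < r, u s ∈ pa (u (s + 1))) ∧ (∀ s, 0 < s → s < r → u s ∉ S) := by
    intro t ht y hd
    induction hd using Relation.TransGen.head_induction_on with
    | single h =>
      rename_i y'
      rcases ht with hAB' | hS
      · refine Or.inr (Or.inr ⟨1, fun s => if s = 0 then y' else t, le_rfl, by simp, by simpa using hAB', ?_, by omega⟩)
        intro s hs
        have : s = 0 := by omega
        subst this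
        simpa using h
      · exact Or.inl (Or.inr ⟨t, Relation.TransGen.single h, hS⟩)
    | head h' hdc ihc =>
      rename_i a c
      rcases ihc with hDS | hAB' | ⟨r, u, hr, h0, hrAB, hdir, hS⟩
      · rcases hDS with hcS | ⟨d, hd1, hd2⟩
        · exact Or.inl (Or.inr ⟨c, Relation.TransGen.single h', hcS⟩)
        · exact Or.inl (Or.inr ⟨d, Relation.TransGen.head h' hd1, hd2⟩)
      · by_cases hcS : c ∈ S
        · exact Or.inl (Or.inr ⟨c, Relation.TransGen.single h', hcS⟩)
        · refine Or.inr (Or.inr ⟨1, fun s => if s = 0 then a else c, le_rfl, by simp, by simpa using hAB', ?_, by omega⟩)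
          intro s hs
          have : s = 0 := by omega
          subst this
          simpa using h'
      · by_cases hcS : c ∈ S
        · exact Or.inl (Or.inr ⟨c, Relation.TransGen.single h', hcS⟩)
        · refine Or.inr (Or.inr ⟨r + 1, fun s => if s = 0 then a else u (s - 1), by omega,
            by simp, ?_, ?_, ?_⟩)
          · simpa using hrAB
          · intro s hs
            rcases Nat.eq_zero_or_pos s with h | h
            · subst h
              simpa [h0] using h'
            · have e1 : (if s = 0 then a else u (s - 1)) = u (s - 1) := if_neg (by omega)
              have e2 : (if s + 1 = 0 then a else u (s + 1 - 1)) = u (s - 1 + 1) := by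
                rw [if_neg (by omega)]
                congr 1
                omega
              show (if s = 0 then a else u (s - 1)) ∈ pa (if s + 1 = 0 then a else u (s + 1 - 1))
              rw [e1, e2]
              exact hdir (s - 1) (by omega)
          · intro s hs1 hs2
            show (if s = 0 then a else u (s - 1)) ∉ S
            rw [if_neg (by omega)]
            rcases Nat.eq_or_lt_of_le (Nat.one_le_iff_ne_zero.2 (by omega) : 1 ≤ s) with h | h
            · rw [← h]
              simpa [h0] using hcS
            · exact hS (s - 1) (by omega) (by omega)
  intro y hy
  obtain ⟨t, ht, rfl | hd⟩ := hy
  · rcases ht with hAB' | hS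
    · exact Or.inr (Or.inl hAB')
    · exact Or.inl (Or.inl hS)
  · exact H t ht y hd

end GM3

section GM4
variable {n : ℕ}

/-- a good walk: an active walk from `A` to `y` which can absorb a further
incoming edge at `y`. -/
def GoodW (pa : Fin n → Finset (Fin n)) (A S : Set (Fin n)) (y : Fin n) : Prop :=
  ∃ (m : ℕ) (v : ℕ → Fin n), ActiveW pa S m v ∧ v 0 ∈ A ∧ v m = y ∧
    (m = 0 ∨ ¬ (v (m - 1) ∈ pa y) ∨ DescS pa S y)

lemma activeW_snoc (pa : Fin n → Finset (Fin n)) (S : Set (Fin n)) {m : ℕ}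
    {v : ℕ → Fin n} {x y : Fin n}
    (hv : ActiveW pa S m v) (hvm : v m = x) (hxy : AdjGM pa x y)
    (hj : 0 < m → (v (m - 1) ∈ pa x → y ∈ pa x → DescS pa S x) ∧
      (¬ (v (m - 1) ∈ pa x ∧ y ∈ pa x) → x ∉ S)) :
    ∃ W : ℕ → Fin n, ActiveW pa S (m + 1) W ∧ W 0 = v 0 ∧ W m = x ∧ W (m + 1) = y := by
  have hu := activeW_single pa S hxy
  have hvu : v m = (fun k : ℕ => if k = 0 then x else y) 0 := by simpa using hvm
  have hcat := activeW_concat pa S hv hu hvu (by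
    intro hm _
    simp only [if_neg (one_ne_zero), if_pos rfl]
    rw [hvm]
    exact hj hm)
  refine ⟨_, hcat, ?_, ?_, ?_⟩
  · simp
  · simpa using hvm
  · have h1 : ¬ (m + 1 ≤ m) := by omega
    simp [h1]

lemma atil_good (pa : Fin n → Finset (Fin n)) (hpa : ∀ i j, j ∈ pa i → j < i)
    {A B S : Set (Fin n)} (hAS : Disjoint A S)
    (hno : ¬ ∃ (m : ℕ) (v : ℕ → Fin n), 1 ≤ m ∧ ActiveW pa S m v ∧ v 0 ∈ A ∧ v m ∈ B) :
    ∀ y ∈ Atil pa A B S, GoodW pa A S y := by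
  classical
  intro y hy
  obtain ⟨a, ha, hrt⟩ := hy
  induction hrt with
  | refl => exact ⟨0, fun _ => a, activeW_nil pa S a, ha, rfl, Or.inl rfl⟩
  | @tail x y hrt hstep ih =>
    obtain ⟨hM, hyS⟩ := hstep
    have hxS : x ∉ S := (atil_mem pa hAS ⟨a, ha, hrt⟩).2
    obtain ⟨m, v, hv, hv0, hvm, hend⟩ := ih
    obtain ⟨hxT, hyT, hedge⟩ := hM
    -- helper : snoc the walk with an edge x—y, junction conditions handled when
    -- the new edge is *out of* x, or when `hend` provides what is needed
    rcases hedge with hxy | hyx | ⟨c, hcT, hxc, hyc⟩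
    · -- x ∈ pa y
      have hsnoc : ∃ W : ℕ → Fin n, ActiveW pa S (m + 1) W ∧ W 0 = v 0 ∧ W m = x ∧
          W (m + 1) = y := by
        refine activeW_snoc pa S hv hvm (Or.inl hxy) ?_
        intro _
        constructor
        · intro _ h2
          exact absurd (pa_antisymm pa hpa hxy h2) id
        · intro _
          exact hxS
      obtain ⟨W, hW, hW0, hWm, hWm1⟩ := hsnoc
      rcases reach_split pa A B S y hyT with hDS | hABm | ⟨r, u, hr, h0, hur, hdir, huS⟩
      · exact ⟨m + 1, W, hW, hW0 ▸ hv0, hWm1, Or.inr (Or.inr hDS)⟩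
      · rcases hABm with hyA | hyB
        · exact ⟨0, fun _ => y, activeW_nil pa S y, hyA, rfl, Or.inl rfl⟩
        · exact absurd ⟨m + 1, W, by omega, hW, hW0 ▸ hv0, hWm1 ▸ hyB⟩ hno
      · rcases hur with hA | hB
        · -- restart from A along the reversed directed path
          refine ⟨r, fun k => u (r - k), activeW_rev pa hpa S hdir huS, ?_, ?_, ?_⟩
          · simpa using hA
          · simpa using h0
          · refine Or.inr (Or.inl ?_)
            have e : r - (r - 1) = 1 := by omega
            simp only [e]
            intro hcon
            rw [← h0] at hcon
            exact pa_antisymm pa hpa (by simpa using hdir 0 (by omega)) hcon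
        · -- continue to B along the directed path : contradiction
          have hu' : ActiveW pa S r u := activeW_dir pa hpa S hdir huS
          have hvu : W (m + 1) = u 0 := by rw [hWm1, h0]
          have hcat := activeW_concat pa S hW hu' hvu (by
            intro _ _
            constructor
            · intro _ h2
              exact (pa_antisymm pa hpa (hdir 0 (by omega)) h2).elim
            · intro _
              rw [hWm1]
              exact hyS)
          refine absurd ⟨m + 1 + r, _, by omega, hcat, ?_, ?_⟩ hno
          · have h0' : (0 : ℕ) ≤ m + 1 := by omega
            simpa [h0'] using (hW0 ▸ hv0)
          · have h1 : ¬ (m + 1 + r ≤ m + 1) := by omega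
            have e : m + 1 + r - (m + 1) = r := by omega
            simpa [h1, e] using hB
    · -- y ∈ pa x
      have hsnoc : ∃ W : ℕ → Fin n, ActiveW pa S (m + 1) W ∧ W 0 = v 0 ∧ W m = x ∧
          W (m + 1) = y := by
        refine activeW_snoc pa S hv hvm (Or.inr hyx) ?_
        intro hm
        constructor
        · intro h1 _
          rcases hend with h | h | h
          · omega
          · exact absurd h1 h
          · exact h
        · intro _
          exact hxS
      obtain ⟨W, hW, hW0, hWm, hWm1⟩ := hsnoc
      refine ⟨m + 1, W, hW, hW0 ▸ hv0, hWm1, Or.inr (Or.inl ?_)⟩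
      have e : m + 1 - 1 = m := by omega
      rw [e, hWm]
      intro hcon
      exact pa_antisymm pa hpa hcon hyx
    · -- common child c
      -- first: the walk extended to c
      have hsnocc : ∃ W : ℕ → Fin n, ActiveW pa S (m + 1) W ∧ W 0 = v 0 ∧ W m = x ∧
          W (m + 1) = c := by
        refine activeW_snoc pa S hv hvm (Or.inl hxc) ?_
        intro _
        exact ⟨fun _ h2 => absurd (pa_antisymm pa hpa hxc h2) id, fun _ => hxS⟩
      by_cases hcDS : DescS pa S c
      · obtain ⟨W1, hW1, hW10, hW1m, hW1m1⟩ := hsnocc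
        have hsnoc2 : ∃ W : ℕ → Fin n, ActiveW pa S (m + 1 + 1) W ∧ W 0 = W1 0 ∧
            W (m + 1) = c ∧ W (m + 1 + 1) = y := by
          refine activeW_snoc pa S hW1 hW1m1 (Or.inr hyc) ?_
          intro _
          refine ⟨fun _ _ => hcDS, fun hn => absurd ⟨?_, hyc⟩ hn⟩
          have e : m + 1 - 1 = m := by omega
          rw [e, hW1m]
          exact hxc
        obtain ⟨W2, hW2, hW20, hW2m, hW2m1⟩ := hsnoc2
        refine ⟨m + 2, W2, hW2, by rw [hW20, hW10]; exact hv0, hW2m1, Or.inr (Or.inl ?_)⟩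
        have e : m + 2 - 1 = m + 1 := by omega
        rw [e, hW2m]
        intro hcon
        exact pa_antisymm pa hpa hcon hyc
      · have hcS : c ∉ S := fun h => hcDS (Or.inl h)
        rcases reach_split pa A B S c hcT with hDS | hABm | ⟨r, u, hr, h0, hur, hdir, huS⟩
        · exact absurd hDS hcDS
        · rcases hABm with hcA | hcB
          · -- walk [c, y]
            refine ⟨1, fun k => if k = 0 then c else y,
              activeW_single pa S (Or.inr hyc), by simpa using hcA, by simp, Or.inr (Or.inl ?_)⟩
            simp only [Nat.sub_self, if_pos rfl]
            intro hcon
            exact pa_antisymm pa hpa hcon hyc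
          · obtain ⟨W1, hW1, hW10, hW1m, hW1m1⟩ := hsnocc
            exact absurd ⟨m + 1, W1, by omega, hW1, hW10 ▸ hv0, hW1m1 ▸ hcB⟩ hno
        · rcases hur with hA | hB
          · -- reversed path from A to c, then edge to y
            have hrev := activeW_rev pa hpa S hdir huS
            have hrevr : (fun k => u (r - k)) r = c := by simpa using h0
            have hsnoc2 : ∃ W : ℕ → Fin n, ActiveW pa S (r + 1) W ∧
                W 0 = (fun k => u (r - k)) 0 ∧ W r = c ∧ W (r + 1) = y := by
              refine activeW_snoc pa S hrev hrevr (Or.inr hyc) ?_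
              intro _
              constructor
              · intro h1 _
                exfalso
                have e : r - (r - 1) = 1 := by omega
                simp only [e] at h1
                rw [← h0] at h1
                exact pa_antisymm pa hpa (by simpa using hdir 0 (by omega)) h1
              · intro _
                exact hcS
            obtain ⟨W, hW, hW0, hWr, hWr1⟩ := hsnoc2
            refine ⟨r + 1, W, hW, ?_, hWr1, Or.inr (Or.inl ?_)⟩
            · rw [hW0]; simpa using hA
            · have e : r + 1 - 1 = r := by omega
              rw [e, hWr]
              intro hcon
              exact pa_antisymm pa hpa hcon hyc
          · -- walk to c then directed path to B : contradiction
            obtain ⟨W1, hW1, hW10, hW1m, hW1m1⟩ := hsnocc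
            have hu' : ActiveW pa S r u := activeW_dir pa hpa S hdir huS
            have hvu : W1 (m + 1) = u 0 := by rw [hW1m1, h0]
            have hcat := activeW_concat pa S hW1 hu' hvu (by
              intro _ _
              constructor
              · intro _ h2
                exact (pa_antisymm pa hpa (hdir 0 (by omega)) h2).elim
              · intro _
                rw [hW1m1]
                exact hcS)
            refine absurd ⟨m + 1 + r, _, by omega, hcat, ?_, ?_⟩ hno
            · have h0' : (0 : ℕ) ≤ m + 1 := by omega
              simpa [h0'] using (hW10 ▸ hv0)
            · have h1 : ¬ (m + 1 + r ≤ m + 1) := by omega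
              have e : m + 1 + r - (m + 1) = r := by omega
              simpa [h1, e] using hB

end GM4

/-- Global Markov property for Bayesian uncertainty networks: for a Bayesian
uncertainty network with joint uncertainty set `⋂ i, C i` and all constraints
always definite, if `A`, `B`, `S` are pairwise disjoint (not necessarily
spanning) and `S` d-separates `A` and `B`, then `A` and `B` are conditionally
independent given `S`. -/
theorem global_markov_property {n : ℕ}
    (pa : Fin n → Finset (Fin n)) (hpa : ∀ i j, j ∈ pa i → j < i)
    (D : Fin n → Type*) (hD : ∀ i, Nonempty (D i))
    (C : Fin n → Set (∀ j, D j))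
    (hloc : ∀ i (x x' : ∀ j, D j),
      (∀ j, (j = i ∨ j ∈ pa i) → x j = x' j) → (x ∈ C i ↔ x' ∈ C i))
    (hdef : ∀ i (x : ∀ k, D k), ∃ v : D i, Function.update x i v ∈ C i)
    (A B S : Set (Fin n))
    (hAB : Disjoint A B) (hAS : Disjoint A S) (hBS : Disjoint B S)
    (hsep : DSep pa A B S) :
    CondIndep (⋂ i, C i) A B S := by
  classical
  intro u hu w hw huw
  -- there is no active walk from `A` to `B`
  have hno : ¬ ∃ (m : ℕ) (v : ℕ → Fin n), 1 ≤ m ∧ ActiveW pa S m v ∧ v 0 ∈ A ∧ v m ∈ B := by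
    rintro ⟨m, v, hm, hv, h0, hmB⟩
    obtain ⟨m', v', ht, hnb, h0', hm'⟩ := activeW_to_trail pa hpa hAB m v hm hv h0 hmB
    exact hnb (hsep m' v' ht h0' hm')
  -- `B` is disjoint from the moral reachability set of `A`
  have hBA : ∀ b, b ∈ B → b ∉ Atil pa A B S := by
    intro b hb hbA
    obtain ⟨m, v, hv, hv0, hvm, hend⟩ := atil_good pa hpa hAS hno b hbA
    rcases Nat.eq_zero_or_pos m with h | h
    · subst h
      exact Set.disjoint_left.1 hAB (hvm ▸ hv0) hb
    · exact hno ⟨m, v, h, hv, hv0, hvm ▸ hb⟩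
  have hAtT : ∀ y, y ∈ Atil pa A B S → y ∈ Anc pa (A ∪ B ∪ S) ∧ y ∉ S :=
    fun y hy => atil_mem pa hAS hy
  -- coordinatewise construction of the witness `z`
  have key : ∀ m : ℕ, m ≤ n → ∃ z : ∀ j, D j,
      (∀ i : Fin n, (i : ℕ) < m → z ∈ C i) ∧
      (∀ i : Fin n, (i : ℕ) < m →
        ((i ∈ Atil pa A B S ∨ i ∈ S) → z i = u i) ∧
        (i ∈ Anc pa (A ∪ B ∪ S) → i ∉ Atil pa A B S → i ∉ S → z i = w i)) := by
    intro m
    induction m with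
    | zero =>
      exact fun _ => ⟨u, fun i hi => absurd hi (by omega), fun i hi => absurd hi (by omega)⟩
    | succ m ih =>
      intro hm1
      obtain ⟨z, hz1, hz2⟩ := ih (by omega)
      set i : Fin n := ⟨m, by omega⟩ with hidef
      have hiv : (i : ℕ) = m := rfl
      have hparlt : ∀ j, j ∈ pa i → (j : ℕ) < m := by
        intro j hj
        have := hpa i j hj
        exact lt_of_lt_of_le this (le_of_eq hiv)
      have hne : ∀ j : Fin n, (j : ℕ) < m → j ≠ i := by
        intro j hj h
        rw [h] at hj
        omega
      -- updating coordinate `i` preserves all earlier constraints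
      have hpres : ∀ (val : D i) (k : Fin n), (k : ℕ) < m →
          Function.update z i val ∈ C k := by
        intro val k hk
        refine (hloc k _ z ?_).2 (hz1 k hk)
        intro j hj
        have hjlt : (j : ℕ) < m := by
          rcases hj with rfl | hj
          · exact hk
          · exact lt_trans (hpa k j hj) hk
        exact Function.update_of_ne (hne j hjlt) _ _
      have hold : ∀ (val : D i) (k : Fin n), (k : ℕ) < m →
          Function.update z i val k = z k := by
        intro val k hk
        exact Function.update_of_ne (hne k hk) _ _
      have hkey2 : ∀ (val : D i), (Function.update z i val ∈ C i) →
          ((i ∈ Atil pa A B S ∨ i ∈ S) → val = u i) →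
          ((i ∈ Anc pa (A ∪ B ∪ S) → i ∉ Atil pa A B S → i ∉ S → val = w i)) →
          ∃ z' : ∀ j, D j,
          (∀ k : Fin n, (k : ℕ) < m + 1 → z' ∈ C k) ∧
          (∀ k : Fin n, (k : ℕ) < m + 1 →
            ((k ∈ Atil pa A B S ∨ k ∈ S) → z' k = u k) ∧
            (k ∈ Anc pa (A ∪ B ∪ S) → k ∉ Atil pa A B S → k ∉ S → z' k = w k)) := by
        intro val hCi hvu hvw
        refine ⟨Function.update z i val, ?_, ?_⟩
        · intro k hk
          rcases Nat.lt_or_ge (k : ℕ) m with h | h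
          · exact hpres val k h
          · have hkm : (k : ℕ) = m := by omega
            have : k = i := Fin.ext (by rw [hkm, hiv])
            rw [this]
            exact hCi
        · intro k hk
          rcases Nat.lt_or_ge (k : ℕ) m with h | h
          · constructor
            · intro hks
              rw [hold val k h]
              exact (hz2 k h).1 hks
            · intro h1 h2 h3
              rw [hold val k h]
              exact (hz2 k h).2 h1 h2 h3
          · have hkm : (k : ℕ) = m := by omega
            have hki : k = i := Fin.ext (by rw [hkm, hiv])
            subst hki
            constructor
            · intro hks
              rw [Function.update_self]
              exact hvu hks
            · intro h1 h2 h3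
              rw [Function.update_self]
              exact hvw h1 h2 h3
      by_cases hiA : i ∈ Atil pa A B S
      · -- agree with u
        have hiT : i ∈ Anc pa (A ∪ B ∪ S) := (hAtT i hiA).1
        have hpar : ∀ j, j ∈ pa i → z j = u j := by
          intro j hj
          by_cases hjS : j ∈ S
          · exact (hz2 j (hparlt j hj)).1 (Or.inr hjS)
          · have hjA : j ∈ Atil pa A B S := by
              refine atil_step pa hiA ⟨hiT, anc_parent pa hiT hj, Or.inr (Or.inl hj)⟩ hjS
            exact (hz2 j (hparlt j hj)).1 (Or.inl hjA)
        have hCi : Function.update z i (u i) ∈ C i := by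
          refine (hloc i _ u ?_).2 (Set.mem_iInter.1 hu i)
          intro j hj
          rcases hj with rfl | hj
          · exact Function.update_self _ _ _
          · rw [Function.update_of_ne (hne j (hparlt j hj)) _ _]
            exact hpar j hj
        exact hkey2 (u i) hCi (fun _ => rfl) (fun _ h2 _ => absurd hiA h2)
      · by_cases hiS : i ∈ S
        · have hiT : i ∈ Anc pa (A ∪ B ∪ S) :=
            subset_anc pa _ (Or.inr hiS)
          by_cases hall : ∀ j, j ∈ pa i → (j ∈ Atil pa A B S ∨ j ∈ S)
          · -- all parents agree with u
            have hpar : ∀ j, j ∈ pa i → z j = u j := by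
              intro j hj
              exact (hz2 j (hparlt j hj)).1 (hall j hj)
            have hCi : Function.update z i (u i) ∈ C i := by
              refine (hloc i _ u ?_).2 (Set.mem_iInter.1 hu i)
              intro j hj
              rcases hj with rfl | hj
              · exact Function.update_self _ _ _
              · rw [Function.update_of_ne (hne j (hparlt j hj)) _ _]
                exact hpar j hj
            exact hkey2 (u i) hCi (fun _ => rfl) (fun _ _ h3 => absurd hiS h3)
          · -- some parent is outside `Atil ∪ S`; then all parents agree with w
            push_neg at hall
            obtain ⟨j0, hj0, hj0A, hj0S⟩ := hall
            have hpar : ∀ j, j ∈ pa i → z j = w j := by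
              intro j hj
              by_cases hjS : j ∈ S
              · rw [(hz2 j (hparlt j hj)).1 (Or.inr hjS)]
                exact huw j hjS
              · have hjA : j ∉ Atil pa A B S := by
                  intro hjA
                  exact hj0A (atil_step pa hjA
                    ⟨anc_parent pa hiT hj, anc_parent pa hiT hj0,
                      Or.inr (Or.inr ⟨i, hiT, hj, hj0⟩)⟩ hj0S)
                exact (hz2 j (hparlt j hj)).2 (anc_parent pa hiT hj) hjA hjS
            have hCi : Function.update z i (u i) ∈ C i := by
              refine (hloc i _ w ?_).2 (Set.mem_iInter.1 hw i)
              intro j hj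
              rcases hj with rfl | hj
              · rw [Function.update_self]
                exact huw _ hiS
              · rw [Function.update_of_ne (hne j (hparlt j hj)) _ _]
                exact hpar j hj
            exact hkey2 (u i) hCi (fun _ => rfl) (fun _ _ h3 => absurd hiS h3)
        · by_cases hiT : i ∈ Anc pa (A ∪ B ∪ S)
          · -- agree with w
            have hpar : ∀ j, j ∈ pa i → z j = w j := by
              intro j hj
              by_cases hjS : j ∈ S
              · rw [(hz2 j (hparlt j hj)).1 (Or.inr hjS)]
                exact huw j hjS
              · have hjA : j ∉ Atil pa A B S := by
                  intro hjA
                  exact hiA (atil_step pa hjA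
                    ⟨anc_parent pa hiT hj, hiT, Or.inl hj⟩ hiS)
                exact (hz2 j (hparlt j hj)).2 (anc_parent pa hiT hj) hjA hjS
            have hCi : Function.update z i (w i) ∈ C i := by
              refine (hloc i _ w ?_).2 (Set.mem_iInter.1 hw i)
              intro j hj
              rcases hj with rfl | hj
              · exact Function.update_self _ _ _
              · rw [Function.update_of_ne (hne j (hparlt j hj)) _ _]
                exact hpar j hj
            refine hkey2 (w i) hCi ?_ (fun _ _ _ => rfl)
            rintro (h | h)
            · exact absurd h hiA
            · exact absurd h hiS
          · -- outside the ancestral set : use definiteness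
            obtain ⟨val, hval⟩ := hdef i z
            refine hkey2 val hval ?_ (fun h _ _ => absurd h hiT)
            rintro (h | h)
            · exact absurd (hAtT i h).1 hiT
            · exact absurd (subset_anc pa _ (Or.inr h)) hiT
  obtain ⟨z, hz1, hz2⟩ := key n le_rfl
  refine ⟨z, Set.mem_iInter.2 (fun i => hz1 i i.isLt), ?_, ?_⟩
  · intro k hk
    rcases hk with hkA | hkS
    · exact (hz2 k k.isLt).1 (Or.inl (subset_atil pa A B S hkA))
    · exact (hz2 k k.isLt).1 (Or.inr hkS)
  · intro k hk
    exact (hz2 k k.isLt).2 (subset_anc pa _ (Or.inl (Or.inr hk))) (hBA k hk)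
      (Set.disjoint_left.1 hBS hk)
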